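/- Let A be a commutative ring and (a₁, …, a_d) a regular sequence in A. Let B = A[x₁, …, x_{d−1}]/(a₁ − a_d x₁, …, a_{d−1} − a_d x_{d−1}). Then the image of a_d in B is a non-zero-divisor. -/

import Mathlib

open MvPolynomial

private lemma ideal_ofList_ofFn {A : Type*} [CommRing A] {n : ℕ} (v : Fin n → A) :
    Ideal.ofList (List.ofFn v) = Ideal.span (Set.range v) := by
  have hset : {r | r ∈ List.ofFn v} = Set.range v := by
    ext x
    exact List.mem_ofFn
  rw [Ideal.ofList, hset]

/-- Extract the non-zero-divisor conditions from a weakly regular sequence. -/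
private lemma reg_extract {A : Type*} [CommRing A] {d : ℕ} {a : Fin (d + 1) → A}
    (h : RingTheory.Sequence.IsWeaklyRegular A (List.ofFn a)) {k : ℕ} (hk : k < d + 1)
    {c : A}
    (hc : a ⟨k, hk⟩ * c ∈ Ideal.span (Set.range fun i : Fin k => a (Fin.castLE hk.le i))) :
    c ∈ Ideal.span (Set.range fun i : Fin k => a (Fin.castLE hk.le i)) := by
  have hlen : k < (List.ofFn a).length := by simpa using hk
  have htake : Ideal.ofList ((List.ofFn a).take k) =
      Ideal.span (Set.range fun i : Fin k => a (Fin.castLE hk.le i)) := by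
    rw [← Fin.ofFn_take_eq_take_ofFn hk.le a, ideal_ofList_ofFn]
    rfl
  have hsm : (Ideal.ofList ((List.ofFn a).take k) • ⊤ : Submodule A A) =
      Ideal.ofList ((List.ofFn a).take k) := by
    apply le_antisymm
    · exact Submodule.smul_le.mpr fun r hr m _ => by
        simpa [smul_eq_mul] using Ideal.mul_mem_right m _ hr
    · intro x hx
      simpa using Submodule.smul_mem_smul hx (Submodule.mem_top (x := (1 : A)))
  have hr := h.regular_mod_prev k hlen
  have hgetElem : (List.ofFn a)[k] = a ⟨k, hk⟩ := by rw [List.getElem_ofFn]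
  have h0 : (List.ofFn a)[k] •
      (Submodule.Quotient.mk c :
        A ⧸ (Ideal.ofList ((List.ofFn a).take k) • ⊤ : Submodule A A)) =
      (List.ofFn a)[k] • (0 : A ⧸ (Ideal.ofList ((List.ofFn a).take k) • ⊤ : Submodule A A)) := by
    rw [smul_zero, ← Submodule.Quotient.mk_smul, Submodule.Quotient.mk_eq_zero, hsm, htake,
      hgetElem]
    simpa [smul_eq_mul] using hc
  have := hr h0
  rw [Submodule.Quotient.mk_eq_zero, hsm, htake] at this
  exact this

/-- Syzygies of a (weakly) regular sequence are generated by the Koszul relations. -/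
private lemma koszul_syzygy {R : Type*} [CommRing R] :
    ∀ (n : ℕ) (b : Fin n → R),
      (∀ (k : ℕ) (hk : k < n) (c : R),
          b ⟨k, hk⟩ * c ∈ Ideal.span (Set.range fun i : Fin k => b (Fin.castLE hk.le i)) →
          c ∈ Ideal.span (Set.range fun i : Fin k => b (Fin.castLE hk.le i))) →
      ∀ c : Fin n → R, (∑ i, c i * b i = 0) →
      ∃ m : Fin n → Fin n → R, (∀ i, m i i = 0) ∧ (∀ i j, m i j = - m j i) ∧
        ∀ i, c i = ∑ j, m i j * b j := by
  intro n
  induction n with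
  | zero =>
    intro b _ c _
    exact ⟨0, fun i => rfl, fun i j => by simp, fun i => i.elim0⟩
  | succ n ih =>
    intro b hb c hc
    rw [Fin.sum_univ_castSucc] at hc
    -- the last coefficient lies in the ideal of the previous elements
    have hcast : ∀ i : Fin n, Fin.castLE (Nat.lt_succ_self n).le i = i.castSucc := fun i => rfl
    have hlast : b ⟨n, Nat.lt_succ_self n⟩ * c (Fin.last n) ∈
        Ideal.span (Set.range fun i : Fin n => b (Fin.castLE (Nat.lt_succ_self n).le i)) := by
      have hb' : b ⟨n, Nat.lt_succ_self n⟩ = b (Fin.last n) := rfl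
      have : b ⟨n, Nat.lt_succ_self n⟩ * c (Fin.last n) =
          - ∑ i : Fin n, c i.castSucc * b i.castSucc := by
        rw [hb']; linear_combination hc
      rw [this]
      exact neg_mem (Ideal.sum_mem _ fun i _ =>
        Ideal.mul_mem_left _ _ (Ideal.subset_span ⟨i, rfl⟩))
    have hclast := hb n (Nat.lt_succ_self n) (c (Fin.last n)) hlast
    have hclast' : c (Fin.last n) ∈
        Ideal.span (Set.range fun i : Fin n => b i.castSucc) := by
      convert hclast using 3
      rfl
    obtain ⟨e, he⟩ := Ideal.mem_span_range_iff_exists_fun.mp hclast'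
    -- the modified coefficients give a syzygy of the shorter sequence
    set b' : Fin n → R := fun i => b i.castSucc with hb'def
    set c' : Fin n → R := fun i => c i.castSucc + e i * b (Fin.last n) with hc'def
    have hsum : ∑ i, c' i * b' i = 0 := by
      have e1 : ∑ i, c' i * b' i =
          (∑ i : Fin n, c i.castSucc * b i.castSucc) + (∑ i, e i * b' i) * b (Fin.last n) := by
        rw [Finset.sum_mul, ← Finset.sum_add_distrib]
        exact Finset.sum_congr rfl fun i _ => by simp only [hc'def, hb'def]; ring
      rw [e1, he]
      linear_combination hc
    have hbreg' : ∀ (k : ℕ) (hk : k < n) (x : R),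
        b' ⟨k, hk⟩ * x ∈ Ideal.span (Set.range fun i : Fin k => b' (Fin.castLE hk.le i)) →
        x ∈ Ideal.span (Set.range fun i : Fin k => b' (Fin.castLE hk.le i)) := by
      intro k hk x hx
      have hkey : (fun i : Fin k => b' (Fin.castLE hk.le i)) =
          (fun i : Fin k => b (Fin.castLE (hk.trans (Nat.lt_succ_self n)).le i)) := rfl
      have hbk : b' ⟨k, hk⟩ = b ⟨k, hk.trans (Nat.lt_succ_self n)⟩ := rfl
      rw [hkey] at hx ⊢
      rw [hbk] at hx
      exact hb k (hk.trans (Nat.lt_succ_self n)) x hx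
    obtain ⟨m', hm'diag, hm'anti, hm'rep⟩ := ih b' hbreg' c' hsum
    -- assemble the alternating matrix
    refine ⟨fun i => Fin.lastCases
        (fun j => Fin.lastCases 0 (fun j' => e j') j)
        (fun i' j => Fin.lastCases (- e i') (fun j' => m' i' j') j) i, ?_, ?_, ?_⟩
    · intro i
      refine Fin.lastCases ?_ (fun i' => ?_) i
      · simp
      · simp [hm'diag i']
    · intro i j
      refine Fin.lastCases ?_ (fun i' => ?_) i <;> refine Fin.lastCases ?_ (fun j' => ?_) j
      · simp only [Fin.lastCases_last]
        rw [neg_zero]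
      · simp only [Fin.lastCases_last, Fin.lastCases_castSucc, neg_neg]
      · simp only [Fin.lastCases_last, Fin.lastCases_castSucc]
      · simp only [Fin.lastCases_castSucc]
        exact hm'anti i' j' 
    · intro i
      refine Fin.lastCases ?_ (fun i' => ?_) i
      · rw [Fin.sum_univ_castSucc]
        simp only [Fin.lastCases_last, Fin.lastCases_castSucc, zero_mul, add_zero]
        exact he.symm
      · rw [Fin.sum_univ_castSucc]
        simp only [Fin.lastCases_last, Fin.lastCases_castSucc]
        have := hm'rep i'
        simp only [hc'def, hb'def] at this
        have h2 : c i'.castSucc = (∑ j, m' i' j * b j.castSucc) - e i' * b (Fin.last n) := by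
          rw [← this]; ring
        rw [h2]; ring

/-- Transfer of the non-zero-divisor property to constants in a polynomial ring. -/
private lemma creg {A : Type*} [CommRing A] {d k : ℕ} (s : Fin k → A) (u : A)
    (h : ∀ c : A, u * c ∈ Ideal.span (Set.range s) → c ∈ Ideal.span (Set.range s))
    (p : MvPolynomial (Fin d) A)
    (hp : C u * p ∈ Ideal.span (Set.range fun i => (C (s i) : MvPolynomial (Fin d) A))) :
    p ∈ Ideal.span (Set.range fun i => (C (s i) : MvPolynomial (Fin d) A)) := by
  have hmap : Ideal.span (Set.range fun i => (C (s i) : MvPolynomial (Fin d) A)) =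
      Ideal.map (C : A →+* MvPolynomial (Fin d) A) (Ideal.span (Set.range s)) := by
    rw [Ideal.map_span]
    congr 1
    rw [← Set.range_comp]
    rfl
  rw [hmap] at hp ⊢
  rw [MvPolynomial.mem_map_C_iff] at hp ⊢
  intro m
  have := hp m
  rw [coeff_C_mul] at this
  exact h _ this

/-- In the blow-up chart `B = A[x₁,…,x_d]/(aᵢ - a_{d+1} xᵢ)` of a regular sequence
`(a₁,…,a_{d+1})`, the image of the last element is a non-zero-divisor. -/
theorem stmt0 (A : Type*) [CommRing A] (d : ℕ) (a : Fin (d + 1) → A)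
    (hreg : RingTheory.Sequence.IsRegular A (List.ofFn a))
    (I : Ideal (MvPolynomial (Fin d) A))
    (hI : I = Ideal.span (Set.range fun i : Fin d =>
      C (a i.castSucc) - C (a (Fin.last d)) * X i)) :
    Ideal.Quotient.mk I (C (a (Fin.last d))) ∈
      nonZeroDivisors (MvPolynomial (Fin d) A ⧸ I) := by
  subst hI
  set t : A := a (Fin.last d) with ht
  set rr : Fin d → MvPolynomial (Fin d) A :=
    fun i => C (a i.castSucc) - C t * X i with hrr
  have hwreg := hreg.toIsWeaklyRegular
  -- regularity of the last element modulo the previous ones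
  have hregd : ∀ c : A,
      t * c ∈ Ideal.span (Set.range fun i : Fin d => a i.castSucc) →
      c ∈ Ideal.span (Set.range fun i : Fin d => a i.castSucc) := by
    intro c hc
    have h1 : (fun i : Fin d => a (Fin.castLE (Nat.lt_succ_self d).le i)) =
        (fun i : Fin d => a i.castSucc) := rfl
    have h2 : a ⟨d, Nat.lt_succ_self d⟩ = t := rfl
    have := reg_extract hwreg (Nat.lt_succ_self d) (c := c) (by rw [h1, h2]; exact hc)
    rwa [h1] at this
  -- the key claim : multiplication by C t reflects membership in I
  have key : ∀ f : MvPolynomial (Fin d) A,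
      C t * f ∈ Ideal.span (Set.range rr) → f ∈ Ideal.span (Set.range rr) := by
    intro f hf
    obtain ⟨g, hg⟩ := Ideal.mem_span_range_iff_exists_fun.mp hf
    -- Step 1 : f + ∑ g i * X i lies in the ideal generated by the constants C aᵢ
    have hg' : (∑ i, g i * C (a i.castSucc)) - (∑ i, g i * (C t * X i)) = C t * f := by
      rw [← Finset.sum_sub_distrib, ← hg]
      exact Finset.sum_congr rfl fun i _ => by simp only [hrr]; ring
    have h1 : C t * (f + ∑ i, g i * X i) = ∑ i, g i * C (a i.castSucc) := by
      have e1 : ∑ i, C t * (g i * X i) = ∑ i, g i * (C t * X i) :=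
        Finset.sum_congr rfl fun i _ => by ring
      rw [mul_add, Finset.mul_sum, e1, ← hg']
      ring
    have h2 : (f + ∑ i, g i * X i) ∈
        Ideal.span (Set.range fun i : Fin d => (C (a i.castSucc) : MvPolynomial (Fin d) A)) := by
      apply creg (fun i : Fin d => a i.castSucc) t hregd
      rw [h1]
      exact Ideal.sum_mem _ fun i _ => Ideal.mul_mem_left _ _ (Ideal.subset_span ⟨i, rfl⟩)
    obtain ⟨h', hh⟩ := Ideal.mem_span_range_iff_exists_fun.mp h2
    -- Step 2 : a syzygy of the C aᵢ with coefficients g i - C t * h' i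
    set cc : Fin d → MvPolynomial (Fin d) A := fun i => g i - C t * h' i with hcc
    have hsyz : ∑ i, cc i * C (a i.castSucc) = 0 := by
      have e2 : ∑ i, cc i * C (a i.castSucc) =
          (∑ i, g i * C (a i.castSucc)) - C t * ∑ i, h' i * C (a i.castSucc) := by
        rw [Finset.mul_sum, ← Finset.sum_sub_distrib]
        exact Finset.sum_congr rfl fun i _ => by simp only [hcc]; ring
      rw [e2, hh, ← h1]
      ring
    -- regularity hypotheses for the truncated sequence, over the polynomial ring
    have hbreg : ∀ (k : ℕ) (hk : k < d) (p : MvPolynomial (Fin d) A),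
        (fun i : Fin d => (C (a i.castSucc) : MvPolynomial (Fin d) A)) ⟨k, hk⟩ * p ∈
          Ideal.span (Set.range fun i : Fin k =>
            (fun i : Fin d => (C (a i.castSucc) : MvPolynomial (Fin d) A)) (Fin.castLE hk.le i)) →
        p ∈ Ideal.span (Set.range fun i : Fin k =>
            (fun i : Fin d => (C (a i.castSucc) : MvPolynomial (Fin d) A)) (Fin.castLE hk.le i)) := by
      intro k hk p hp
      have hk' : k < d + 1 := hk.trans (Nat.lt_succ_self d)
      have hAreg : ∀ c : A,
          a (⟨k, hk⟩ : Fin d).castSucc * c ∈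
            Ideal.span (Set.range fun i : Fin k => a ((Fin.castLE hk.le i).castSucc)) →
          c ∈ Ideal.span (Set.range fun i : Fin k => a ((Fin.castLE hk.le i).castSucc)) := by
        intro c hc
        have heq : (fun i : Fin k => a ((Fin.castLE hk.le i).castSucc)) =
            (fun i : Fin k => a (Fin.castLE hk'.le i)) := rfl
        have heq2 : a (⟨k, hk⟩ : Fin d).castSucc = a ⟨k, hk'⟩ := rfl
        rw [heq] at hc ⊢
        rw [heq2] at hc
        exact reg_extract hwreg hk' hc
      exact creg (fun i : Fin k => a ((Fin.castLE hk.le i).castSucc))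
        (a (⟨k, hk⟩ : Fin d).castSucc) hAreg p hp
    obtain ⟨m, hmdiag, hmanti, hmrep⟩ :=
      koszul_syzygy d (fun i : Fin d => (C (a i.castSucc) : MvPolynomial (Fin d) A))
        hbreg cc hsyz
    -- Step 3 : the alternating double sum vanishes
    have hskew : ∑ p ∈ Finset.univ ×ˢ Finset.univ,
        m p.1 p.2 * (X p.1 * X p.2) = (0 : MvPolynomial (Fin d) A) := by
      apply Finset.sum_ninvolution Prod.swap
      · intro p
        have := hmanti p.1 p.2
        simp only [Prod.fst_swap, Prod.snd_swap]
        rw [this]; ring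
      · intro p hp
        intro hcontra
        apply hp
        have : p.2 = p.1 := congrArg Prod.fst hcontra
        rw [this, hmdiag]
        ring
      · intro p; simp
      · intro p; simp
    have hskew' : ∑ i, ∑ j, m i j * (X i * X j) = (0 : MvPolynomial (Fin d) A) := by
      rw [← hskew, Finset.sum_product]
    -- Step 4 : assemble the final expression of f
    have hfinal : f = (∑ i, h' i * rr i) - (∑ i, ∑ j, (m i j * X i) * rr j)
        - C t * ∑ i, ∑ j, m i j * (X i * X j) := by
      have e3 : ∑ i, h' i * rr i =
          (∑ i, h' i * C (a i.castSucc)) - C t * ∑ i, h' i * X i := by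
        rw [Finset.mul_sum, ← Finset.sum_sub_distrib]
        exact Finset.sum_congr rfl fun i _ => by simp only [hrr]; ring
      have e4 : ∑ i, cc i * X i = (∑ i, g i * X i) - C t * ∑ i, h' i * X i := by
        rw [Finset.mul_sum, ← Finset.sum_sub_distrib]
        exact Finset.sum_congr rfl fun i _ => by simp only [hcc]; ring
      have e5 : ∑ i, cc i * X i = (∑ i, ∑ j, (m i j * X i) * rr j)
          + C t * ∑ i, ∑ j, m i j * (X i * X j) := by
        have e5a : ∀ i : Fin d, cc i * X i =
            ∑ j, ((m i j * X i) * rr j + C t * (m i j * (X i * X j))) := by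
          intro i
          rw [hmrep i, Finset.sum_mul]
          exact Finset.sum_congr rfl fun j _ => by simp only [hrr]; ring
        calc ∑ i, cc i * X i
            = ∑ i, ∑ j, ((m i j * X i) * rr j + C t * (m i j * (X i * X j))) :=
              Finset.sum_congr rfl fun i _ => e5a i
          _ = (∑ i, ∑ j, (m i j * X i) * rr j)
              + ∑ i, ∑ j, C t * (m i j * (X i * X j)) := by
              rw [← Finset.sum_add_distrib]
              exact Finset.sum_congr rfl fun i _ => Finset.sum_add_distrib
          _ = (∑ i, ∑ j, (m i j * X i) * rr j)
              + C t * ∑ i, ∑ j, m i j * (X i * X j) := by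
              congr 1
              rw [Finset.mul_sum]
              exact Finset.sum_congr rfl fun i _ => by rw [Finset.mul_sum]
      have e6 : f = (∑ i, h' i * rr i) - ∑ i, cc i * X i := by
        rw [e3, e4, hh]
        ring
      rw [e6, e5]
      ring
    rw [hfinal, hskew', mul_zero, sub_zero]
    apply Ideal.sub_mem
    · exact Ideal.sum_mem _ fun i _ => Ideal.mul_mem_left _ _ (Ideal.subset_span ⟨i, rfl⟩)
    · exact Ideal.sum_mem _ fun i _ => Ideal.sum_mem _ fun j _ =>
        Ideal.mul_mem_left _ _ (Ideal.subset_span ⟨j, rfl⟩)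
  -- conclude
  rw [mem_nonZeroDivisors_iff_right]
  intro x hx
  obtain ⟨p, rfl⟩ := Ideal.Quotient.mk_surjective x
  rw [← map_mul, Ideal.Quotient.eq_zero_iff_mem] at hx
  rw [mul_comm] at hx
  exact (Ideal.Quotient.eq_zero_iff_mem).mpr (key p hx)
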